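/- Let λ, μ : [0,∞) → ℝ be continuous and nonnegative and y₀ ∈ [0,1], and let Y : [0,∞) → ℝ be differentiable with Y'(t) = λ(t)(1 − Y(t))Y(t) − μ(t)Y(t) for all t ≥ 0 and Y(0) = y₀. Then Y(t) ∈ [0,1] for all t ≥ 0, and v(t) := (Y(t), Y(t)²) is the unique solution on [0,∞) with nonnegative second component of the system v₁'(t) = λ(t)(v₁(t) − v₂(t)) − μ(t)v₁(t), v₂'(t) = 2λ(t)(v₂(t) − v₂(t)^{3/2}) − 2μ(t)v₂(t), with initial condition v(0) = (y₀, y₀²). -/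

import Mathlib

open Set Filter


lemma rpow32_sq {x : ℝ} (hx : 0 ≤ x) : (x ^ 2 : ℝ) ^ ((3:ℝ)/2) = x ^ 3 := by
  rw [← Real.rpow_natCast x 2, ← Real.rpow_mul hx]
  norm_num

lemma rpow32_mono {a b : ℝ} (hb0 : 0 ≤ b) (hba : b ≤ a) :
    b ^ ((3:ℝ)/2) ≤ a ^ ((3:ℝ)/2) :=
  Real.rpow_le_rpow hb0 hba (by norm_num)

lemma rpow32_lip_aux {a b : ℝ} (ha1 : a ≤ 1) (hb0 : 0 ≤ b) (hba : b ≤ a) :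
    a ^ ((3:ℝ)/2) - b ^ ((3:ℝ)/2) ≤ 3/2 * (a - b) := by
  have ha0 : 0 ≤ a := hb0.trans hba
  set α := a ^ ((1:ℝ)/2) with hα
  set β := b ^ ((1:ℝ)/2) with hβ
  have hα0 : 0 ≤ α := Real.rpow_nonneg ha0 _
  have hβ0 : 0 ≤ β := Real.rpow_nonneg hb0 _
  have hβα : β ≤ α := Real.rpow_le_rpow hb0 hba (by norm_num)
  have hα1 : α ≤ 1 := Real.rpow_le_one ha0 ha1 (by norm_num)
  have h2a : α ^ 2 = a := by
    rw [hα, ← Real.rpow_natCast (a ^ ((1:ℝ)/2)) 2, ← Real.rpow_mul ha0]; norm_num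
  have h2b : β ^ 2 = b := by
    rw [hβ, ← Real.rpow_natCast (b ^ ((1:ℝ)/2)) 2, ← Real.rpow_mul hb0]; norm_num
  have h3a : a ^ ((3:ℝ)/2) = α ^ 3 := by
    rw [hα, ← Real.rpow_natCast (a ^ ((1:ℝ)/2)) 3, ← Real.rpow_mul ha0]; norm_num
  have h3b : b ^ ((3:ℝ)/2) = β ^ 3 := by
    rw [hβ, ← Real.rpow_natCast (b ^ ((1:ℝ)/2)) 3, ← Real.rpow_mul hb0]; norm_num
  rw [h3a, h3b, ← h2a, ← h2b]
  nlinarith [mul_nonneg (sub_nonneg.2 hβα) (mul_nonneg hα0 (sub_nonneg.2 hα1)),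
    mul_nonneg (sub_nonneg.2 hβα) (mul_nonneg hβ0 (sub_nonneg.2 (hβα.trans hα1))),
    mul_nonneg (sub_nonneg.2 hβα) (sub_nonneg.2 hβα)]

lemma rpow32_lip {a b : ℝ} (ha0 : 0 ≤ a) (ha1 : a ≤ 1) (hb0 : 0 ≤ b) (hb1 : b ≤ 1) :
    |a ^ ((3:ℝ)/2) - b ^ ((3:ℝ)/2)| ≤ 3/2 * |a - b| := by
  rcases le_total b a with h | h
  · rw [abs_of_nonneg (sub_nonneg.2 (rpow32_mono hb0 h)), abs_of_nonneg (sub_nonneg.2 h)]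
    exact rpow32_lip_aux ha1 hb0 h
  · rw [abs_sub_comm, abs_sub_comm a b,
      abs_of_nonneg (sub_nonneg.2 (rpow32_mono ha0 h)), abs_of_nonneg (sub_nonneg.2 h)]
    exact rpow32_lip_aux hb1 ha0 h

lemma hasDerivAt_primitive {g : ℝ → ℝ} (hg : Continuous g) (t : ℝ) :
    HasDerivAt (fun u => ∫ s in (0:ℝ)..u, g s) (g t) t :=
  intervalIntegral.integral_hasDerivAt_right (hg.intervalIntegrable 0 t)
    (hg.stronglyMeasurableAtFilter _ _) hg.continuousAt

/-- If `Y' = c t * Y + r t` on `[0,∞)` with `r ≥ 0` and `Y 0 ≥ 0`, then `Y ≥ 0` on `[0,∞)`. -/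
lemma ode_nonneg {c r : ℝ → ℝ} {Y : ℝ → ℝ} (hc : Continuous c)
    (hY : ∀ t ≥ (0:ℝ), HasDerivAt Y (c t * Y t + r t) t) (hr : ∀ t ≥ (0:ℝ), 0 ≤ r t)
    (h0 : 0 ≤ Y 0) : ∀ t ≥ (0:ℝ), 0 ≤ Y t := by
  intro t ht
  set C : ℝ → ℝ := fun u => ∫ s in (0:ℝ)..u, c s with hCdef
  have hC : ∀ x : ℝ, HasDerivAt C (c x) x := hasDerivAt_primitive hc
  set u : ℝ → ℝ := fun s => Y s * Real.exp (-(C s)) with hudef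
  have hu : ∀ x ≥ (0:ℝ), HasDerivAt u (r x * Real.exp (-(C x))) x := by
    intro x hx
    have h2 : HasDerivAt (fun s => Real.exp (-(C s))) (Real.exp (-(C x)) * -(c x)) x :=
      ((hC x).neg).exp
    have h3 := (hY x hx).mul h2
    refine h3.congr_deriv ?_
    ring
  have hmono : MonotoneOn u (Icc 0 t) := by
    apply monotoneOn_of_deriv_nonneg (convex_Icc 0 t)
    · intro x hx
      exact ((hu x hx.1).continuousAt).continuousWithinAt
    · intro x hx
      rw [interior_Icc] at hx
      exact ((hu x hx.1.le).differentiableAt).differentiableWithinAt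
    · intro x hx
      rw [interior_Icc] at hx
      rw [(hu x hx.1.le).deriv]
      exact mul_nonneg (hr x hx.1.le) (Real.exp_nonneg _)
  have hu0 : u 0 = Y 0 := by
    simp [hudef, hCdef, intervalIntegral.integral_same]
  have h1 : u 0 ≤ u t := hmono (left_mem_Icc.2 ht) (right_mem_Icc.2 ht) ht
  have h2 : 0 ≤ Y t * Real.exp (-(C t)) := by
    have : (0:ℝ) ≤ u t := by rw [← hu0] at h0; exact h0.trans h1
    simpa [hudef] using this
  have := Real.exp_pos (-(C t))
  nlinarith


/-- The limiting infected fraction `Y` of the time-varying mean-field SIS model stays in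
`[0,1]`, and `v = (Y, Y²)` is the unique solution, with nonnegative second component, of the
auxiliary system `v₁' = λ(t)(v₁ − v₂) − μ(t)v₁`, `v₂' = 2λ(t)(v₂ − v₂^{3/2}) − 2μ(t)v₂`
with initial condition `(y₀, y₀²)`. -/
theorem stmt_15 (lam mu : ℝ → ℝ) (hlamc : Continuous lam) (hmuc : Continuous mu)
    (hlam : ∀ t : ℝ, 0 ≤ lam t) (hmu : ∀ t : ℝ, 0 ≤ mu t)
    (y₀ : ℝ) (hy₀ : y₀ ∈ Icc (0 : ℝ) 1)
    (Y : ℝ → ℝ)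
    (hY : ∀ t ≥ (0 : ℝ),
      HasDerivAt Y (lam t * (1 - Y t) * Y t - mu t * Y t) t)
    (hY0 : Y 0 = y₀) :
    (∀ t ≥ (0 : ℝ), Y t ∈ Icc (0 : ℝ) 1) ∧
    (∀ t ≥ (0 : ℝ),
      HasDerivAt (fun s => Y s) (lam t * (Y t - Y t ^ 2) - mu t * Y t) t ∧
      HasDerivAt (fun s => Y s ^ 2)
        (2 * lam t * (Y t ^ 2 - (Y t ^ 2) ^ ((3 : ℝ) / 2)) - 2 * mu t * Y t ^ 2) t) ∧
    (∀ v₁ v₂ : ℝ → ℝ,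
      v₁ 0 = y₀ → v₂ 0 = y₀ ^ 2 →
      (∀ t ≥ (0 : ℝ), 0 ≤ v₂ t) →
      (∀ t ≥ (0 : ℝ),
        HasDerivAt v₁ (lam t * (v₁ t - v₂ t) - mu t * v₁ t) t ∧
        HasDerivAt v₂
          (2 * lam t * (v₂ t - v₂ t ^ ((3 : ℝ) / 2)) - 2 * mu t * v₂ t) t) →
      ∀ t ≥ (0 : ℝ), v₁ t = Y t ∧ v₂ t = Y t ^ 2) := by
  have hmax : Continuous fun s : ℝ => max s 0 := continuous_id.max continuous_const
  have hYc : ∀ s : ℝ, 0 ≤ s → ContinuousAt Y s := fun s hs => (hY s hs).continuousAt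
  have hYm : Continuous (fun s => Y (max s 0)) := by
    rw [continuous_iff_continuousAt]
    intro s
    exact ContinuousAt.comp (x := s) (hYc _ (le_max_right s 0)) hmax.continuousAt
  -- nonnegativity of Y
  have hYnn : ∀ t ≥ (0:ℝ), 0 ≤ Y t := by
    apply ode_nonneg
      (c := fun s => lam (max s 0) * (1 - Y (max s 0)) - mu (max s 0)) (r := fun _ => (0:ℝ))
    · exact ((hlamc.comp hmax).mul (continuous_const.sub hYm)).sub (hmuc.comp hmax)
    · intro s hs
      have hms : max s 0 = s := max_eq_left hs
      convert hY s hs using 1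
      rw [hms]; ring
    · intro s _; exact le_refl 0
    · rw [hY0]; exact hy₀.1
  -- Y ≤ 1
  have hYle1 : ∀ t ≥ (0:ℝ), Y t ≤ 1 := by
    have key : ∀ t ≥ (0:ℝ), 0 ≤ 1 - Y t := by
      apply ode_nonneg (Y := fun s => 1 - Y s)
        (c := fun s => -(lam (max s 0) * Y (max s 0))) (r := fun s => mu s * Y s)
      · exact ((hlamc.comp hmax).mul hYm).neg
      · intro s hs
        have hms : max s 0 = s := max_eq_left hs
        have h1 := (hY s hs).const_sub 1
        refine h1.congr_deriv ?_
        rw [hms]; ring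
      · intro s hs; exact mul_nonneg (hmu s) (hYnn s hs)
      · simpa [hY0] using hy₀.2
    intro t ht
    linarith [key t ht]
  have part1 : ∀ t ≥ (0:ℝ), Y t ∈ Icc (0:ℝ) 1 := fun t ht => ⟨hYnn t ht, hYle1 t ht⟩
  refine ⟨part1, ?_, ?_⟩
  · intro t ht
    have hcube : (Y t ^ 2 : ℝ) ^ ((3:ℝ)/2) = Y t ^ 3 := rpow32_sq (hYnn t ht)
    constructor
    · convert hY t ht using 1
      ring
    · have h2 := (hY t ht).pow 2
      refine h2.congr_deriv ?_
      rw [hcube]; ring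
  · intro v₁ v₂ hv10 hv20 hv2nn hv
    have hv2c : ∀ s : ℝ, 0 ≤ s → ContinuousAt v₂ s := fun s hs => ((hv s hs).2).continuousAt
    -- v₂ stays ≤ 1
    have hv2le : ∀ s ≥ (0:ℝ), v₂ s ≤ 1 := by
      intro s hs
      by_contra hgt
      push_neg at hgt
      set S : Set ℝ := {r ∈ Icc (0:ℝ) s | v₂ r ≤ 1} with hSdef
      have hS0 : (0:ℝ) ∈ S := by
        refine ⟨left_mem_Icc.2 hs, ?_⟩
        rw [hv20]
        have h1 := hy₀.1; have h2 := hy₀.2; nlinarith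
      have hScl : IsClosed S := by
        have hSeq : S = Icc (0:ℝ) s ∩ v₂ ⁻¹' Iic 1 := by
          ext r; simp [hSdef]
        rw [hSeq]
        exact ContinuousOn.preimage_isClosed_of_isClosed
          (fun r hr => (hv2c r hr.1).continuousWithinAt) isClosed_Icc isClosed_Iic
      have hScomp : IsCompact S := isCompact_Icc.of_isClosed_subset hScl (fun r hr => hr.1)
      obtain ⟨t₁, ⟨⟨ht₁0, ht₁s⟩, ht₁le1⟩, ht₁ub⟩ := hScomp.exists_isGreatest ⟨0, hS0⟩
      have hmid : ∀ r, t₁ < r → r ≤ s → 1 < v₂ r := by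
        intro r hr1 hrs
        by_contra hle
        push_neg at hle
        exact absurd (ht₁ub ⟨⟨ht₁0.trans hr1.le, hrs⟩, hle⟩) (not_le.2 hr1)
      have hanti : AntitoneOn v₂ (Icc t₁ s) := by
        apply antitoneOn_of_deriv_nonpos (convex_Icc t₁ s)
        · intro r hr; exact (hv2c r (ht₁0.trans hr.1)).continuousWithinAt
        · intro r hr
          rw [interior_Icc] at hr
          exact ((hv r (ht₁0.trans hr.1.le)).2.differentiableAt).differentiableWithinAt
        · intro r hr
          rw [interior_Icc] at hr
          have hr0 : (0:ℝ) ≤ r := ht₁0.trans hr.1.le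
          rw [(hv r hr0).2.deriv]
          have h1r : (1:ℝ) ≤ v₂ r := (hmid r hr.1 hr.2.le).le
          have hpow : v₂ r ≤ v₂ r ^ ((3:ℝ)/2) := by
            nth_rewrite 1 [← Real.rpow_one (v₂ r)]
            exact Real.rpow_le_rpow_of_exponent_le h1r (by norm_num)
          nlinarith [hlam r, hmu r, mul_nonneg (hlam r) (sub_nonneg.2 hpow),
            mul_nonneg (hmu r) (zero_le_one.trans h1r)]
      have hfin := hanti (left_mem_Icc.2 ht₁s) (right_mem_Icc.2 ht₁s) ht₁s
      linarith
    -- Grönwall uniqueness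
    intro t ht
    obtain ⟨C₁, hC₁⟩ :=
      (isCompact_Icc (a := (0:ℝ)) (b := t)).exists_bound_of_continuousOn hlamc.continuousOn
    obtain ⟨C₂, hC₂⟩ :=
      (isCompact_Icc (a := (0:ℝ)) (b := t)).exists_bound_of_continuousOn hmuc.continuousOn
    set M : ℝ := |C₁| + |C₂| + 1 with hM
    have hM0 : (0:ℝ) < M := by positivity
    have hlamM : ∀ x ∈ Icc (0:ℝ) t, lam x ≤ M := by
      intro x hx
      have h := hC₁ x hx
      rw [Real.norm_eq_abs] at h
      have h2 := le_abs_self C₁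
      have h3 := le_abs_self (lam x)
      have h4 := abs_nonneg C₂
      linarith
    have hmuM : ∀ x ∈ Icc (0:ℝ) t, mu x ≤ M := by
      intro x hx
      have h := hC₂ x hx
      rw [Real.norm_eq_abs] at h
      have h2 := le_abs_self C₂
      have h3 := le_abs_self (mu x)
      have h4 := abs_nonneg C₁
      linarith
    set e : ℝ → ℝ × ℝ := fun s => (v₁ s - Y s, v₂ s - Y s ^ 2) with he
    set e' : ℝ → ℝ × ℝ := fun s =>
      (lam s * ((v₁ s - Y s) - (v₂ s - Y s ^ 2)) - mu s * (v₁ s - Y s),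
       2 * lam s * ((v₂ s - Y s ^ 2) - (v₂ s ^ ((3:ℝ)/2) - (Y s ^ 2) ^ ((3:ℝ)/2)))
         - 2 * mu s * (v₂ s - Y s ^ 2)) with he'
    have hde : ∀ x ≥ (0:ℝ), HasDerivAt e (e' x) x := by
      intro x hx
      have h1 : HasDerivAt (fun s => v₁ s - Y s)
          (lam x * ((v₁ x - Y x) - (v₂ x - Y x ^ 2)) - mu x * (v₁ x - Y x)) x := by
        have h := (hv x hx).1.sub (hY x hx)
        refine h.congr_deriv ?_
        ring
      have h2 : HasDerivAt (fun s => v₂ s - Y s ^ 2)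
          (2 * lam x * ((v₂ x - Y x ^ 2) - (v₂ x ^ ((3:ℝ)/2) - (Y x ^ 2) ^ ((3:ℝ)/2)))
            - 2 * mu x * (v₂ x - Y x ^ 2)) x := by
        have h := (hv x hx).2.sub ((hY x hx).pow 2)
        refine h.congr_deriv ?_
        rw [rpow32_sq (hYnn x hx)]
        ring
      exact h1.prodMk h2
    have hbound : ∀ x ∈ Ico (0:ℝ) t, ‖e' x‖ ≤ (7*M) * ‖e x‖ + 0 := by
      intro x hx
      have hx0 := hx.1
      have hxI : x ∈ Icc (0:ℝ) t := ⟨hx.1, hx.2.le⟩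
      have hlx := hlamM x hxI
      have hmx := hmuM x hxI
      have hl0 := hlam x
      have hm0 := hmu x
      set A := |v₁ x - Y x| with hA
      set B := |v₂ x - Y x ^ 2| with hB
      have hA0 : 0 ≤ A := abs_nonneg _
      have hB0 : 0 ≤ B := abs_nonneg _
      have hN : ‖e x‖ = max A B := by
        rw [he]; simp [Prod.norm_def, Real.norm_eq_abs]; rfl
      have hAN : A ≤ ‖e x‖ := by rw [hN]; exact le_max_left _ _
      have hBN : B ≤ ‖e x‖ := by rw [hN]; exact le_max_right _ _
      have hN0 : (0:ℝ) ≤ ‖e x‖ := norm_nonneg _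
      have hY1 : (0:ℝ) ≤ Y x ^ 2 := sq_nonneg _
      have hY2 : Y x ^ 2 ≤ 1 := by
        have h1 := hYnn x hx0; have h2 := hYle1 x hx0; nlinarith
      have hd : |v₂ x ^ ((3:ℝ)/2) - (Y x ^ 2) ^ ((3:ℝ)/2)| ≤ 3/2 * B :=
        rpow32_lip (hv2nn x hx0) (hv2le x hx0) hY1 hY2
      rw [he', Prod.norm_def]
      have p1 : lam x * A ≤ M * ‖e x‖ := mul_le_mul hlx hAN hA0 hM0.le
      have p2 : lam x * B ≤ M * ‖e x‖ := mul_le_mul hlx hBN hB0 hM0.le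
      have p3 : mu x * A ≤ M * ‖e x‖ := mul_le_mul hmx hAN hA0 hM0.le
      have p4 : mu x * B ≤ M * ‖e x‖ := mul_le_mul hmx hBN hB0 hM0.le
      have hMN : (0:ℝ) ≤ M * ‖e x‖ := mul_nonneg hM0.le hN0
      apply max_le
      · rw [Real.norm_eq_abs]
        have habs : |(v₁ x - Y x) - (v₂ x - Y x ^ 2)| ≤ A + B := by
          rw [hA, hB]; exact abs_sub _ _
        calc |lam x * ((v₁ x - Y x) - (v₂ x - Y x ^ 2)) - mu x * (v₁ x - Y x)|
            ≤ |lam x * ((v₁ x - Y x) - (v₂ x - Y x ^ 2))| + |mu x * (v₁ x - Y x)| :=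
              abs_sub _ _
          _ = lam x * |(v₁ x - Y x) - (v₂ x - Y x ^ 2)| + mu x * A := by
              rw [abs_mul, abs_mul, abs_of_nonneg hl0, abs_of_nonneg hm0, hA]
          _ ≤ lam x * (A + B) + mu x * A := by
              have := mul_le_mul_of_nonneg_left habs hl0
              linarith
          _ = lam x * A + lam x * B + mu x * A := by ring
          _ ≤ 7 * M * ‖e x‖ + 0 := by linarith
      · rw [Real.norm_eq_abs]
        have habs : |(v₂ x - Y x ^ 2) - (v₂ x ^ ((3:ℝ)/2) - (Y x ^ 2) ^ ((3:ℝ)/2))|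
            ≤ B + 3/2 * B := by
          refine le_trans (abs_sub _ _) ?_
          rw [hB]
          exact add_le_add le_rfl hd
        calc |2 * lam x * ((v₂ x - Y x ^ 2) - (v₂ x ^ ((3:ℝ)/2) - (Y x ^ 2) ^ ((3:ℝ)/2)))
              - 2 * mu x * (v₂ x - Y x ^ 2)|
            ≤ |2 * lam x * ((v₂ x - Y x ^ 2) - (v₂ x ^ ((3:ℝ)/2) - (Y x ^ 2) ^ ((3:ℝ)/2)))|
              + |2 * mu x * (v₂ x - Y x ^ 2)| := abs_sub _ _
          _ = 2 * lam x * |(v₂ x - Y x ^ 2) - (v₂ x ^ ((3:ℝ)/2) - (Y x ^ 2) ^ ((3:ℝ)/2))|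
              + 2 * mu x * B := by
              rw [abs_mul, abs_mul, abs_mul, abs_mul, abs_two, abs_of_nonneg hl0,
                abs_of_nonneg hm0, hB]
          _ ≤ 2 * lam x * (B + 3/2 * B) + 2 * mu x * B := by
              have := mul_le_mul_of_nonneg_left habs (by linarith : (0:ℝ) ≤ 2 * lam x)
              linarith
          _ = 5 * (lam x * B) + 2 * (mu x * B) := by ring
          _ ≤ 7 * M * ‖e x‖ + 0 := by linarith
    have hcont : ContinuousOn e (Icc 0 t) :=
      fun x hx => ((hde x hx.1).continuousAt).continuousWithinAt
    have he0 : ‖e 0‖ ≤ 0 := by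
      have hz : e 0 = 0 := by
        rw [he]
        simp only [hv10, hv20, hY0]
        simp [Prod.ext_iff]
      rw [hz, norm_zero]
    have hgron := norm_le_gronwallBound_of_norm_deriv_right_le hcont
      (fun x hx => (hde x hx.1).hasDerivWithinAt) he0 hbound t (right_mem_Icc.2 ht)
    rw [gronwallBound_ε0_δ0, norm_le_zero_iff] at hgron
    have hz : v₁ t - Y t = 0 ∧ v₂ t - Y t ^ 2 = 0 := by
      rw [he] at hgron
      simpa [Prod.ext_iff] using hgron
    exact ⟨by linarith [hz.1], by linarith [hz.2]⟩
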